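/- arXiv:2507.13792 — 4 statements merged into one kernel-verified Lean document; each statement's English description precedes it below -/
import Mathlib

section
/- Let G be an acyclic grade graph and let n be the cardinality of Nodes(G). Then every path p with length(p) ≥ n + 1 satisfies w_G(p) = 0. -/
open scoped Classical

/-- Weight of a path (nonempty list of vertices) in a grade graph. -/
def pathWeight {V R : Type*} [Semiring R] (G : V → V → R) : List V → R
  | [] => 1
  | [_] => 1
  | x :: y :: p => G x y * pathWeight G (y :: p)

/-- The set of non-source nodes of a grade graph. -/
def Nodes {V R : Type*} [Zero R] (G : V → V → R) : Set V := {y | ∃ x, G x y ≠ 0}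

/-- Paths from `x` to `y`: nonempty lists with head `x` and last element `y`. -/
def PathsBtw {V : Type*} (x y : V) : Set (List V) :=
  {p | p ≠ [] ∧ p.head? = some x ∧ p.getLast? = some y}

/-- A cycle: a path with more than one node and equal endpoints. -/
def IsCyclePath {V : Type*} (p : List V) : Prop := 1 < p.length ∧ p.head? = p.getLast?

/-- A grade graph is acyclic if every cycle has weight zero. -/
def Acyclic {V R : Type*} [Semiring R] (G : V → V → R) : Prop :=
  ∀ p : List V, IsCyclePath p → pathWeight G p = 0

/-- Reflexive and transitive closure of a grade graph:
`G*(x,y) = Σ_{p ∈ Paths(x,y)} w_G(p)`. -/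
noncomputable def gstar {V R : Type*} [Semiring R] (G : V → V → R) (x y : V) : R :=
  ∑ᶠ p ∈ PathsBtw x y, pathWeight G p

/-- Grade matrix multiplication. -/
noncomputable def matMul {V R : Type*} [Semiring R] (M₁ M₂ : V → V → R) (x y : V) : R :=
  ∑ᶠ z, M₁ x z * M₂ z y

/-- Identity grade matrix. -/
noncomputable def matId {V R : Type*} [Semiring R] (x y : V) : R := if x = y then 1 else 0

/-- `n`-fold product of a grade graph with itself, with `G⁰ = I`. -/
noncomputable def matPow {V R : Type*} [Semiring R] (G : V → V → R) : ℕ → V → V → R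
  | 0 => matId
  | n + 1 => matMul G (matPow G n)

/-- Multiplication of a grade context by a grade matrix:
`(γ·M)(x) = Σ_y γ(y)·M(y,x)`. -/
noncomputable def ctxMul {V R : Type*} [Semiring R] (γ : V → R) (M : V → V → R) (x : V) : R :=
  ∑ᶠ y, γ y * M y x

/-- A grade matrix: every row has finite support. -/
def RowFinite {V R : Type*} [Zero R] (M : V → V → R) : Prop :=
  ∀ x, {y | M x y ≠ 0}.Finite


lemma pathWeight_split {V R : Type*} [Semiring R] (G : V → V → R) :
    ∀ (a : List V) (m : V) (b : List V),
    pathWeight G (a ++ m :: b) = pathWeight G (a ++ [m]) * pathWeight G (m :: b)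
  | [], m, b => by simp [pathWeight]
  | [x], m, b => by simp [pathWeight]
  | x :: y :: a, m, b => by
    have ih := pathWeight_split G (y :: a) m b
    simp only [List.cons_append, List.append_eq, pathWeight] at *
    rw [ih, mul_assoc]

lemma dup_split {V : Type*} {x : V} : ∀ {l : List V}, List.Sublist [x, x] l →
    ∃ a b c, l = a ++ x :: (b ++ x :: c) := by
  intro l h
  induction l with
  | nil => simp at h
  | cons y t ih =>
    cases h with
    | cons _ h' =>
      obtain ⟨a, b, c, rfl⟩ := ih h'
      exact ⟨y :: a, b, c, rfl⟩
    | cons_cons _ h' =>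
      have hx : x ∈ t := (List.singleton_sublist).mp h'
      obtain ⟨s, u, rfl⟩ := List.append_of_mem hx
      exact ⟨[], s, u, rfl⟩

lemma pathWeight_zero_or_nodes {V R : Type*} [Semiring R] (G : V → V → R) :
    ∀ (h : V) (t : List V), pathWeight G (h :: t) = 0 ∨ ∀ y ∈ t, y ∈ Nodes G
  | h, [] => Or.inr (by simp)
  | h, y :: t => by
    rcases pathWeight_zero_or_nodes G y t with h0 | hmem
    · left; simp [pathWeight, h0]
    · by_cases hGy : G h y = 0
      · left; simp [pathWeight, hGy]
      · right
        intro z hz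
        rcases List.mem_cons.mp hz with rfl | hz
        · exact ⟨h, hGy⟩
        · exact hmem z hz

/-- In an acyclic grade graph `G` with `n = |Nodes(G)|`, every path of length at
least `n + 1` (recall `length(p)` counts edges, i.e., is one less than the number
of nodes) has weight `0`. -/
theorem pathWeight_eq_zero_of_long {V R : Type*} [Semiring R] [PartialOrder R]
    (hadd : ∀ a b c d : R, a ≤ b → c ≤ d → a + c ≤ b + d)
    (hmul : ∀ a b c d : R, a ≤ b → c ≤ d → a * c ≤ b * d)
    (hzero : ∀ r : R, r ≤ 0 → r = 0)
    (G : V → V → R) (hG : {q : V × V | G q.1 q.2 ≠ 0}.Finite)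
    (hacyc : Acyclic G)
    (p : List V) (hp : p ≠ []) (hlen : (Nodes G).ncard + 1 ≤ p.length - 1) :
    pathWeight G p = 0 := by
  obtain ⟨h, t, rfl⟩ := List.exists_cons_of_ne_nil hp
  rcases pathWeight_zero_or_nodes G h t with h0 | hmem
  · exact h0
  have hfin : (Nodes G).Finite := by
    have hsub : Nodes G ⊆ Prod.snd '' {q : V × V | G q.1 q.2 ≠ 0} := by
      rintro y ⟨x, hx⟩; exact ⟨(x, y), hx, rfl⟩
    exact (hG.image _).subset hsub
  have hlen' : (Nodes G).ncard + 1 ≤ t.length := by simpa using hlen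
  have hnd : ¬ t.Nodup := by
    intro hnd
    have hsub : t.toFinset ⊆ hfin.toFinset := by
      intro y hy
      rw [Set.Finite.mem_toFinset]
      exact hmem y (List.mem_toFinset.mp hy)
    have hcard := Finset.card_le_card hsub
    rw [List.toFinset_card_of_nodup hnd] at hcard
    rw [Set.ncard_eq_toFinset_card _ hfin] at hlen'
    omega
  obtain ⟨x, hdup⟩ := List.exists_duplicate_iff_not_nodup.mpr hnd
  obtain ⟨a, b, c, rfl⟩ := dup_split (List.duplicate_iff_sublist.mp hdup)
  have e1 : h :: (a ++ x :: (b ++ x :: c)) = (h :: a) ++ x :: (b ++ x :: c) := rfl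
  have e3 : pathWeight G (x :: (b ++ x :: c))
      = pathWeight G ((x :: b) ++ [x]) * pathWeight G (x :: c) :=
    pathWeight_split G (x :: b) x c
  have hc : pathWeight G ((x :: b) ++ [x]) = 0 := by
    apply hacyc
    constructor
    · simp
    · rw [List.getLast?_concat]; rfl
  rw [e1, pathWeight_split G (h :: a) x (b ++ x :: c), e3, hc, zero_mul, mul_zero]
end

section
/- Let G be an acyclic grade graph. Then for every x ∈ V, (G·G*)(x,x) = Σ_{y ∈ V} G(x,y)·G*(y,x) = 0. -/
open scoped Classical

/-- For an acyclic grade graph `G`,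
`(G·G*)(x,x) = Σ_y G(x,y)·G*(y,x) = 0` for every `x`. -/
theorem mul_gstar_diag_eq_zero {V R : Type*} [Semiring R] [PartialOrder R]
    (hadd : ∀ a b c d : R, a ≤ b → c ≤ d → a + c ≤ b + d)
    (hmul : ∀ a b c d : R, a ≤ b → c ≤ d → a * c ≤ b * d)
    (hzero : ∀ r : R, r ≤ 0 → r = 0)
    (G : V → V → R) (hG : {q : V × V | G q.1 q.2 ≠ 0}.Finite)
    (hacyc : Acyclic G) :
    ∀ x : V, matMul G (gstar G) x x = ∑ᶠ y, G x y * gstar G y x ∧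
      matMul G (gstar G) x x = 0 := by
  intro x
  have key : ∀ y : V, G x y * gstar G y x = 0 := by
    intro y
    have hterm : ∀ p ∈ PathsBtw y x, G x y * pathWeight G p = 0 := by
      rintro p ⟨hne, hhead, hlast⟩
      obtain ⟨z, q, rfl⟩ : ∃ z q, p = z :: q := by
        cases p with
        | nil => exact absurd rfl hne
        | cons z q => exact ⟨z, q, rfl⟩
      simp only [List.head?_cons, Option.some.injEq] at hhead
      rw [hhead] at hlast ⊢
      have : G x y * pathWeight G (y :: q) = pathWeight G (x :: y :: q) := rfl
      rw [this]
      apply hacyc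
      constructor
      · simp [List.length_cons]
      · rw [List.getLast?_cons_cons, hlast]
        rfl
    rw [gstar]
    by_cases hfin : (PathsBtw y x ∩ Function.support (pathWeight G)).Finite
    · rw [finsum_mem_eq_sum _ hfin, Finset.mul_sum]
      apply Finset.sum_eq_zero
      intro p hp
      have hp' := (Set.Finite.mem_toFinset hfin).mp hp
      exact hterm p hp'.1
    · rw [finsum_mem_eq_zero_of_infinite hfin, mul_zero]
  constructor
  · rfl
  · show (∑ᶠ z, G x z * gstar G z x) = 0
    simp only [key, finsum_zero]
end

section
/- Let G be an acyclic grade graph and let n be the cardinality of Nodes(G). Then for every k ≥ n + 1, G^k is the zero grade matrix, i.e., G^k(x,y) = 0 for all x, y ∈ V. -/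
open scoped Classical

lemma pathWeight_cons_cons {V R : Type*} [Semiring R] (G : V → V → R) (x y : V) (p : List V) :
    pathWeight G (x :: y :: p) = G x y * pathWeight G (y :: p) := rfl

lemma pathWeight_append {V R : Type*} [Semiring R] (G : V → V → R) (a : V) :
    ∀ (p₁ p₂ : List V),
    pathWeight G (p₁ ++ a :: p₂) = pathWeight G (p₁ ++ [a]) * pathWeight G (a :: p₂) := by
  intro p₁
  induction p₁ with
  | nil => intro p₂; simp [pathWeight]
  | cons x t ih =>
    intro p₂
    cases t with
    | nil => simp [pathWeight]
    | cons y t' =>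
      show G x y * pathWeight G ((y :: t') ++ a :: p₂)
        = G x y * pathWeight G ((y :: t') ++ [a]) * pathWeight G (a :: p₂)
      rw [ih, mul_assoc]

lemma exists_dup_split {V : Type*} : ∀ (l : List V), ¬ l.Nodup →
    ∃ (a : V) (l₁ l₂ l₃ : List V), l = l₁ ++ a :: l₂ ++ a :: l₃ := by
  intro l
  induction l with
  | nil => intro h; exact absurd List.nodup_nil h
  | cons x t ih =>
    intro h
    by_cases hx : x ∈ t
    · obtain ⟨s, u, rfl⟩ := List.append_of_mem hx
      exact ⟨x, [], s, u, by simp⟩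
    · have ht : ¬ t.Nodup := by
        intro hnd; exact h (List.nodup_cons.mpr ⟨hx, hnd⟩)
      obtain ⟨a, l₁, l₂, l₃, rfl⟩ := ih ht
      exact ⟨a, x :: l₁, l₂, l₃, by simp⟩

lemma key {V R : Type*} [Semiring R] (G : V → V → R)
    (hG : {q : V × V | G q.1 q.2 ≠ 0}.Finite) :
    ∀ (k : ℕ) (r : R) (x y : V), r * matPow G k x y ≠ 0 →
      ∃ p : List V, p.length = k + 1 ∧ p.head? = some x ∧ r * pathWeight G p ≠ 0 := by
  intro k
  induction k with
  | zero =>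
    intro r x y h
    refine ⟨[x], rfl, rfl, ?_⟩
    by_cases hxy : x = y
    · simpa [matPow, matId, hxy, pathWeight] using h
    · simp [matPow, matId, hxy] at h
  | succ k ih =>
    intro r x y h
    have hsupp : (Function.support fun z => G x z * matPow G k z y).Finite := by
      apply Set.Finite.subset (hG.preimage (f := fun z => (x, z))
        (Function.Injective.injOn (fun a b hab => by simpa using congrArg Prod.snd hab)))
      intro z hz
      simp only [Function.mem_support] at hz
      intro hzero
      exact hz (by rw [hzero, zero_mul])
    rw [show matPow G (k+1) = matMul G (matPow G k) from rfl, matMul,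
      mul_finsum' _ _ hsupp] at h
    have : ∃ z, r * (G x z * matPow G k z y) ≠ 0 := by
      by_contra hall
      push_neg at hall
      exact h (finsum_eq_zero_of_forall_eq_zero hall)
    obtain ⟨z, hz⟩ := this
    rw [← mul_assoc] at hz
    obtain ⟨p, hlen, hhead, hw⟩ := ih (r * G x z) z y hz
    cases p with
    | nil => simp at hlen
    | cons w t =>
      have hwz : w = z := by simpa using hhead
      subst hwz
      refine ⟨x :: w :: t, by simpa using hlen, rfl, ?_⟩
      rw [pathWeight_cons_cons, ← mul_assoc]
      exact hw

lemma chain'_of_weight_ne {V R : Type*} [Semiring R] (G : V → V → R) :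
    ∀ p : List V, pathWeight G p ≠ 0 → p.Chain' (fun a b => G a b ≠ 0) := by
  intro p
  induction p with
  | nil => intro _; exact List.isChain_nil
  | cons x t ih =>
    intro h
    cases t with
    | nil => exact List.isChain_singleton _
    | cons y t' =>
      rw [pathWeight_cons_cons] at h
      have h1 : G x y ≠ 0 := fun h0 => h (by rw [h0, zero_mul])
      have h2 : pathWeight G (y :: t') ≠ 0 := fun h0 => h (by rw [h0, mul_zero])
      exact List.isChain_cons_cons.mpr ⟨h1, ih h2⟩

lemma tail_mem_nodes {V R : Type*} [Semiring R] (G : V → V → R) :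
    ∀ (t : List V) (x : V), (x :: t).Chain' (fun a b => G a b ≠ 0) →
      ∀ b ∈ t, b ∈ Nodes G := by
  intro t
  induction t with
  | nil => intro x _ b hb; simp at hb
  | cons y t' ih =>
    intro x hc b hb
    replace hc := List.isChain_cons_cons.mp hc
    rcases List.mem_cons.mp hb with hb | hb
    · subst hb; exact ⟨x, hc.1⟩
    · exact ih y hc.2 b hb

/-- For an acyclic grade graph `G` with `n = |Nodes(G)|`, for every `k ≥ n + 1`
the power `G^k` is the zero grade matrix. -/
theorem matPow_eq_zero_of_large {V R : Type*} [Semiring R] [PartialOrder R]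
    (hadd : ∀ a b c d : R, a ≤ b → c ≤ d → a + c ≤ b + d)
    (hmul : ∀ a b c d : R, a ≤ b → c ≤ d → a * c ≤ b * d)
    (hzero : ∀ r : R, r ≤ 0 → r = 0)
    (G : V → V → R) (hG : {q : V × V | G q.1 q.2 ≠ 0}.Finite)
    (hacyc : Acyclic G) :
    ∀ k : ℕ, (Nodes G).ncard + 1 ≤ k → ∀ x y : V, matPow G k x y = 0 := by
  intro k hk x y
  by_contra hne
  have h1 : (1 : R) * matPow G k x y ≠ 0 := by rwa [one_mul]
  obtain ⟨p, hlen, hhead, hw⟩ := key G hG k 1 x y h1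
  rw [one_mul] at hw
  -- Nodes G is finite
  have hNfin : (Nodes G).Finite := by
    apply Set.Finite.subset (hG.image Prod.snd)
    rintro b ⟨a, hab⟩
    exact ⟨(a, b), hab, rfl⟩
  -- all elements of p.tail are in Nodes G
  have hchain := chain'_of_weight_ne G p hw
  obtain ⟨x₀, t, rfl⟩ : ∃ x₀ t, p = x₀ :: t := by
    cases p with
    | nil => simp at hlen
    | cons a b => exact ⟨a, b, rfl⟩
  have hmem : ∀ b ∈ t, b ∈ Nodes G := tail_mem_nodes G t x₀ hchain
  have htlen : t.length = k := by simpa using hlen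
  -- pigeonhole: t is not nodup
  have hnd : ¬ t.Nodup := by
    intro hnd
    have hsub : t.toFinset ⊆ hNfin.toFinset := by
      intro b hb
      rw [List.mem_toFinset] at hb
      rw [Set.Finite.mem_toFinset]
      exact hmem b hb
    have hcard := Finset.card_le_card hsub
    rw [List.toFinset_card_of_nodup hnd, htlen] at hcard
    rw [Set.ncard_eq_toFinset_card _ hNfin] at hk
    omega
  obtain ⟨a, l₁, l₂, l₃, rfl⟩ := exists_dup_split t hnd
  -- factor the weight
  have e1 : pathWeight G (x₀ :: (l₁ ++ a :: l₂ ++ a :: l₃))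
      = pathWeight G ((x₀ :: l₁) ++ [a]) * pathWeight G (a :: (l₂ ++ a :: l₃)) := by
    have := pathWeight_append G a (x₀ :: l₁) (l₂ ++ a :: l₃)
    simpa using this
  have e3 : pathWeight G (a :: (l₂ ++ a :: l₃))
      = pathWeight G ((a :: l₂) ++ [a]) * pathWeight G (a :: l₃) := by
    have := pathWeight_append G a (a :: l₂) l₃
    simpa using this
  have hcyc : pathWeight G ((a :: l₂) ++ [a]) = 0 := by
    apply hacyc
    refine ⟨by simp, ?_⟩
    rw [List.getLast?_concat]
    simp
  rw [e1, e3, hcyc, zero_mul, mul_zero] at hw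
  exact hw rfl
end

section
/- Let G be a grade graph and let γ₁, γ₂ be grade contexts with γ₁ + γ₂·G ≤ γ₂ (pointwise). Then for every k ∈ ℕ: γ₁·(Σ_{i=0}^{k} Gⁱ) + γ₂·G^{k+1} ≤ γ₂ (pointwise). -/
open scoped Classical

section MyAux

variable {V R : Type*} [Semiring R]

private lemma my_sum_le [PartialOrder R]
    (hadd : ∀ a b c d : R, a ≤ b → c ≤ d → a + c ≤ b + d)
    (s : Finset V) (f g : V → R) (hfg : ∀ y ∈ s, f y ≤ g y) :
    ∑ y ∈ s, f y ≤ ∑ y ∈ s, g y := by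
  classical
  induction s using Finset.induction with
  | empty => simp
  | insert a s' hx ih =>
    rw [Finset.sum_insert hx, Finset.sum_insert hx]
    exact hadd _ _ _ _ (hfg a (Finset.mem_insert_self a s'))
      (ih fun y hy => hfg y (Finset.mem_insert_of_mem hy))

private lemma ctxMul_eq_sum (γ : V → R) (M : V → V → R) (x : V) (s : Finset V)
    (hs : ∀ y, γ y ≠ 0 → y ∈ s) :
    ctxMul γ M x = ∑ y ∈ s, γ y * M y x := by
  apply finsum_eq_finset_sum_of_support_subset
  intro y hy
  rcases eq_or_ne (γ y) 0 with h0 | h0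
  · exact absurd (by simp [h0]) hy
  · exact hs y h0

private lemma ctxMul_matId (γ : V → R) (x : V) : ctxMul γ matId x = γ x := by
  rw [ctxMul, finsum_eq_single _ x (fun y hy => by simp [matId, hy])]
  simp [matId]

private lemma matMul_matId (G : V → V → R) (x y : V) : matMul G matId x y = G x y := by
  rw [matMul, finsum_eq_single _ y (fun z hz => by simp [matId, hz])]
  simp [matId]

private lemma ctxMul_add_ctx (γ γ' : V → R) (hγ : {x | γ x ≠ 0}.Finite)
    (hγ' : {x | γ' x ≠ 0}.Finite) (M : V → V → R) (x : V) :
    ctxMul (fun y => γ y + γ' y) M x = ctxMul γ M x + ctxMul γ' M x := by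
  classical
  set s := hγ.toFinset ∪ hγ'.toFinset with hsdef
  have h1 : ctxMul (fun y => γ y + γ' y) M x = ∑ y ∈ s, (γ y + γ' y) * M y x :=
    ctxMul_eq_sum _ _ _ _ (fun y hy => by
      by_contra hm
      simp only [hsdef, Finset.mem_union, Set.Finite.mem_toFinset, Set.mem_setOf_eq,
        not_or, not_not] at hm
      simp [hm.1, hm.2] at hy)
  rw [h1, ctxMul_eq_sum γ M x s (fun y hy => by
        simp [hsdef, Set.Finite.mem_toFinset]; left; exact hy),
    ctxMul_eq_sum γ' M x s (fun y hy => by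
        simp [hsdef, Set.Finite.mem_toFinset]; right; exact hy)]
  simp [add_mul, Finset.sum_add_distrib]

private lemma ctxMul_add_mat (γ : V → R) (hγ : {x | γ x ≠ 0}.Finite)
    (M N : V → V → R) (x : V) :
    ctxMul γ (fun a b => M a b + N a b) x = ctxMul γ M x + ctxMul γ N x := by
  classical
  rw [ctxMul_eq_sum _ _ x hγ.toFinset (fun y hy => hγ.mem_toFinset.2 hy),
    ctxMul_eq_sum γ M x hγ.toFinset (fun y hy => hγ.mem_toFinset.2 hy),
    ctxMul_eq_sum γ N x hγ.toFinset (fun y hy => hγ.mem_toFinset.2 hy)]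
  simp [mul_add, Finset.sum_add_distrib]

private lemma ctxMul_mono [PartialOrder R]
    (hadd : ∀ a b c d : R, a ≤ b → c ≤ d → a + c ≤ b + d)
    (hmul : ∀ a b c d : R, a ≤ b → c ≤ d → a * c ≤ b * d)
    (γ γ' : V → R) (hγ : {x | γ x ≠ 0}.Finite) (hγ' : {x | γ' x ≠ 0}.Finite)
    (hle : ∀ y, γ y ≤ γ' y) (M : V → V → R) (x : V) :
    ctxMul γ M x ≤ ctxMul γ' M x := by
  classical
  set s := hγ.toFinset ∪ hγ'.toFinset with hsdef
  rw [ctxMul_eq_sum γ M x s (fun y hy => by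
        simp [hsdef, Set.Finite.mem_toFinset]; left; exact hy),
    ctxMul_eq_sum γ' M x s (fun y hy => by
        simp [hsdef, Set.Finite.mem_toFinset]; right; exact hy)]
  exact my_sum_le hadd s _ _ (fun y _ => hmul _ _ _ _ (hle y) le_rfl)

private lemma ctxMul_matMul (γ : V → R) (hγ : {x | γ x ≠ 0}.Finite)
    (G : V → V → R) (hG : {q : V × V | G q.1 q.2 ≠ 0}.Finite)
    (M : V → V → R) (x : V) :
    ctxMul γ (matMul G M) x = ctxMul (ctxMul γ G) M x := by
  classical
  set Z := (hG.image Prod.snd).toFinset with hZdef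
  have hZ : ∀ y z : V, G y z ≠ 0 → z ∈ Z := by
    intro y z hzy
    simp only [hZdef, Set.Finite.mem_toFinset, Set.mem_image]
    exact ⟨(y, z), hzy, rfl⟩
  have hmm : ∀ y, matMul G M y x = ∑ z ∈ Z, G y z * M z x := by
    intro y
    apply finsum_eq_finset_sum_of_support_subset
    intro z hz
    rcases eq_or_ne (G y z) 0 with h0 | h0
    · exact absurd (by simp [h0]) hz
    · exact hZ y z h0
  have hcg : ∀ z, ctxMul γ G z = ∑ y ∈ hγ.toFinset, γ y * G y z := fun z =>
    ctxMul_eq_sum _ _ _ _ (fun y hy => hγ.mem_toFinset.2 hy)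
  rw [ctxMul_eq_sum γ (matMul G M) x hγ.toFinset (fun y hy => hγ.mem_toFinset.2 hy),
    ctxMul_eq_sum (ctxMul γ G) M x Z (fun z hz => by
      by_contra hm
      apply hz
      rw [ctxMul]
      apply finsum_eq_zero_of_forall_eq_zero
      intro y
      rcases eq_or_ne (G y z) 0 with h0 | h0
      · simp [h0]
      · exact absurd (hZ y z h0) hm)]
  simp only [hmm, hcg, Finset.mul_sum, Finset.sum_mul, mul_assoc]
  exact Finset.sum_comm

end MyAux

/-- For a grade graph `G` and grade contexts `γ₁, γ₂` with `γ₁ + γ₂·G ≤ γ₂`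
pointwise: for every `k`, `γ₁·(Σ_{i=0}^{k} Gⁱ) + γ₂·G^{k+1} ≤ γ₂` pointwise. -/
theorem ctx_sum_pows_le {V R : Type*} [Semiring R] [PartialOrder R]
    (hadd : ∀ a b c d : R, a ≤ b → c ≤ d → a + c ≤ b + d)
    (hmul : ∀ a b c d : R, a ≤ b → c ≤ d → a * c ≤ b * d)
    (hzero : ∀ r : R, r ≤ 0 → r = 0)
    (G : V → V → R) (hG : {q : V × V | G q.1 q.2 ≠ 0}.Finite)
    (γ₁ γ₂ : V → R) (hγ₁ : {x | γ₁ x ≠ 0}.Finite) (hγ₂ : {x | γ₂ x ≠ 0}.Finite)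
    (h : ∀ x, γ₁ x + ctxMul γ₂ G x ≤ γ₂ x) :
    ∀ (k : ℕ) (x : V),
      ctxMul γ₁ (fun a b => ∑ i ∈ Finset.range (k + 1), matPow G i a b) x +
        ctxMul γ₂ (matPow G (k + 1)) x ≤ γ₂ x := by
  classical
  have hZfin : {z | ctxMul γ₂ G z ≠ 0}.Finite := by
    apply (hG.image Prod.snd).subset
    intro z hz
    by_contra hm
    apply hz
    apply finsum_eq_zero_of_forall_eq_zero
    intro y
    rcases eq_or_ne (G y z) 0 with h0 | h0
    · simp [h0]
    · exact absurd ⟨(y, z), h0, rfl⟩ hm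
  have hsum : {z | γ₁ z + ctxMul γ₂ G z ≠ 0}.Finite := by
    apply (hγ₁.union hZfin).subset
    intro z hz
    by_contra hm
    simp only [Set.mem_union, Set.mem_setOf_eq, not_or, not_not] at hm
    simp [hm.1, hm.2] at hz
  intro k
  induction k with
  | zero =>
    intro x
    have e1 : (fun a b => ∑ i ∈ Finset.range (0 + 1), matPow G i a b)
        = (matId : V → V → R) := by
      funext a b; simp [matPow]
    have e2 : matPow G 1 = G := by
      funext a b; simp [matPow, matMul_matId]
    rw [e1, e2, ctxMul_matId]
    exact h x
  | succ k ih =>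
    intro x
    have e1 : (fun a b => ∑ i ∈ Finset.range (k + 1 + 1), matPow G i a b)
        = fun a b => (∑ i ∈ Finset.range (k + 1), matPow G i a b) + matPow G (k + 1) a b := by
      funext a b; rw [Finset.sum_range_succ]
    rw [e1, ctxMul_add_mat γ₁ hγ₁]
    have e2 : ctxMul γ₂ (matPow G (k + 1 + 1)) x
        = ctxMul (ctxMul γ₂ G) (matPow G (k + 1)) x := by
      show ctxMul γ₂ (matMul G (matPow G (k + 1))) x = _
      exact ctxMul_matMul γ₂ hγ₂ G hG _ x
    rw [e2, add_assoc]
    have e3 : ctxMul γ₁ (matPow G (k + 1)) x + ctxMul (ctxMul γ₂ G) (matPow G (k + 1)) x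
        = ctxMul (fun y => γ₁ y + ctxMul γ₂ G y) (matPow G (k + 1)) x :=
      (ctxMul_add_ctx γ₁ (ctxMul γ₂ G) hγ₁ hZfin _ x).symm
    rw [e3]
    have step : ctxMul (fun y => γ₁ y + ctxMul γ₂ G y) (matPow G (k + 1)) x
        ≤ ctxMul γ₂ (matPow G (k + 1)) x :=
      ctxMul_mono hadd hmul _ _ hsum hγ₂ h _ x
    exact le_trans (hadd _ _ _ _ le_rfl step) (ih x)
end
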